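/- Let f : ℤ³ → ℤ be the additive homomorphism f(a,b,c) = 4a + 2b + c. Then the kernel of f equals the subgroup of ℤ³ generated by the two vectors (1,−2,0) and (−1,3,−2); in particular, (0,1,−2) = (1,−2,0) + (−1,3,−2) and (1,0,−4) = 3·(1,−2,0) + 2·(−1,3,−2), and the quotient group ℤ³/⟨(1,−2,0), (−1,3,−2)⟩ is isomorphic to ℤ. -/
import Mathlib


/-- The augmentation (cardinality) homomorphism on `A(C₄) ≅ ℤ³`, in the basis
`[C₄/e], [C₄/C₂], [C₄/C₄]`. -/
def f : (ℤ × ℤ × ℤ) →+ ℤ :=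
  AddMonoidHom.mk' (fun p => 4 * p.1 + 2 * p.2.1 + p.2.2) (by
    intro a b
    simp only [Prod.fst_add, Prod.snd_add]
    ring)

/-- `Tr_{C₂}^{C₄}(t-2)`. -/
def v1 : ℤ × ℤ × ℤ := (1, -2, 0)

/-- `Nm_{C₂}^{C₄}(t-2)`. -/
def v2 : ℤ × ℤ × ℤ := (-1, 3, -2)

theorem stmt3 :
    f.ker = AddSubgroup.closure {v1, v2} ∧
    ((0, 1, -2) : ℤ × ℤ × ℤ) = v1 + v2 ∧
    ((1, 0, -4) : ℤ × ℤ × ℤ) = 3 • v1 + 2 • v2 ∧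
    Nonempty (((ℤ × ℤ × ℤ) ⧸ AddSubgroup.closure {v1, v2}) ≃+ ℤ) := by
  have hker : f.ker = AddSubgroup.closure {v1, v2} := by
    apply le_antisymm
    · intro p hp
      have hmem1 : v1 ∈ AddSubgroup.closure ({v1, v2} : Set (ℤ × ℤ × ℤ)) :=
        AddSubgroup.subset_closure (by simp)
      have hmem2 : v2 ∈ AddSubgroup.closure ({v1, v2} : Set (ℤ × ℤ × ℤ)) :=
        AddSubgroup.subset_closure (by simp)
      have hp' : 4 * p.1 + 2 * p.2.1 + p.2.2 = 0 := hp
      have hrep : p = p.1 • ((3:ℤ) • v1 + (2:ℤ) • v2) + p.2.1 • (v1 + v2) := by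
        simp only [v1, v2, Prod.ext_iff, Prod.smul_mk, Prod.mk_add_mk, smul_eq_mul,
          Prod.fst_add, Prod.snd_add]
        refine ⟨by ring, by ring, by omega⟩
      rw [hrep]
      exact AddSubgroup.add_mem _
        (AddSubgroup.zsmul_mem _ (AddSubgroup.add_mem _ (AddSubgroup.zsmul_mem _ hmem1 3)
          (AddSubgroup.zsmul_mem _ hmem2 2)) p.1)
        (AddSubgroup.zsmul_mem _ (AddSubgroup.add_mem _ hmem1 hmem2) p.2.1)
    · rw [AddSubgroup.closure_le]
      rintro x (rfl | rfl) <;>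
        · show _ ∈ f.ker
          rw [AddMonoidHom.mem_ker]
          rfl
  refine ⟨hker, by simp [v1, v2, Prod.ext_iff], by simp [v1, v2, Prod.ext_iff], ?_⟩
  rw [← hker]
  have hsurj : Function.Surjective f := fun n => ⟨(0, 0, n), by simp [f]⟩
  exact ⟨QuotientAddGroup.quotientKerEquivOfSurjective f hsurj⟩
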